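/- Let Σ be a finite abstract simplicial complex of dimension n on a linearly ordered vertex set, and let f : Σ → ℕ be a discrete Morse function with m_k critical k-simplices, 0 ≤ k ≤ n. Then the Morse inequalities hold: m_k ≥ b_k for every k, and Σ_{k=0}^n (−1)^k m_k = Σ_{k=0}^n (−1)^k b_k, where b_k is the k-th Betti number of Σ with real coefficients. -/

import Mathlib

open scoped BigOperators

/-- A finite abstract simplicial complex: a collection of nonempty finite vertex sets closed
under taking nonempty subsets. -/
def IsSimplicialComplex {U : Type*} [LinearOrder U] (K : Finset (Finset U)) : Prop :=
  (∀ σ ∈ K, σ.Nonempty) ∧ ∀ τ ∈ K, ∀ σ ⊆ τ, σ.Nonempty → σ ∈ K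

/-- The set `Σ_k` of `k`-simplices (sets of `k+1` vertices) of `K`. -/
def faces {U : Type*} [LinearOrder U] (K : Finset (Finset U)) (k : ℕ) : Finset (Finset U) :=
  K.filter fun σ => σ.card = k + 1

/-- The degree of a simplex `σ`: the number of cofacets of `σ` in `K`. -/
def degS {U : Type*} [LinearOrder U] (K : Finset (Finset U)) (σ : Finset U) : ℕ :=
  (K.filter fun τ => σ ⊆ τ ∧ τ.card = σ.card + 1).card

/-- The incidence sign `sgn([σ], ∂[τ]) = (−1)^i` when the vertex of `τ` missing from `σ` is the
`(i+1)`-st smallest vertex of `τ` (and `0` if `τ ∖ σ` is not a singleton). -/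
def sgnZ {U : Type*} [LinearOrder U] (σ τ : Finset U) : ℤ :=
  ∑ v ∈ τ \ σ, (-1 : ℤ) ^ (τ.filter fun x => x < v).card

/-- The matrix of the normalized up-Laplacian `Δ_k^up` acting on `k`-cochains:
`(Δ_k^up f)(σ) = f(σ) + (1/deg σ) Σ_{σ'≠σ, common cofacet τ} sgn([σ],∂[τ]) sgn([σ'],∂[τ]) f(σ')`
(each pair of distinct `k`-simplices has at most one common cofacet `τ ∈ Σ_{k+1}`). -/
noncomputable def upLapMatrix {U : Type*} [LinearOrder U] (K : Finset (Finset U)) (k : ℕ) :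
    Matrix {σ // σ ∈ faces K k} {σ // σ ∈ faces K k} ℝ :=
  fun σ σ' =>
    if σ = σ' then 1
    else (degS K σ.1 : ℝ)⁻¹ *
      ∑ τ ∈ K.filter (fun τ => τ.card = k + 2 ∧ σ.1 ⊆ τ ∧ σ'.1 ⊆ τ),
        (sgnZ σ.1 τ : ℝ) * (sgnZ σ'.1 τ : ℝ)

/-- The matrix of the real coboundary `δ_k`:
`(δ_k φ)(τ) = Σ_{σ facet of τ} sgn([σ],∂[τ]) φ(σ)`. -/
noncomputable def cobMatrix {U : Type*} [LinearOrder U] (K : Finset (Finset U)) (k : ℕ) :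
    Matrix {τ // τ ∈ faces K (k + 1)} {σ // σ ∈ faces K k} ℝ :=
  fun τ σ => if σ.1 ⊆ τ.1 then (sgnZ σ.1 τ.1 : ℝ) else 0

/-- The `k`-th Betti number with real coefficients:
`b_k = dim ker δ_k − dim image δ_{k−1}` (with `δ_{−1} := 0`). -/
noncomputable def betti {U : Type*} [LinearOrder U] (K : Finset (Finset U)) : ℕ → ℕ
  | 0 => Module.finrank ℝ (LinearMap.ker (cobMatrix K 0).mulVecLin)
  | (k + 1) => Module.finrank ℝ (LinearMap.ker (cobMatrix K (k + 1)).mulVecLin) -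
      Module.finrank ℝ (LinearMap.range (cobMatrix K k).mulVecLin)

/-- A discrete Morse function: for every simplex `σ` there is at most one cofacet `ρ ⊃ σ` with
`f(ρ) ≤ f(σ)` and at most one facet `τ ⊂ σ` with `f(τ) ≥ f(σ)`. -/
def IsDiscreteMorse {U : Type*} [LinearOrder U] (K : Finset (Finset U))
    (f : Finset U → ℕ) : Prop :=
  ∀ σ ∈ K,
    (K.filter fun ρ => σ ⊆ ρ ∧ ρ.card = σ.card + 1 ∧ f ρ ≤ f σ).card ≤ 1 ∧
    (K.filter fun τ => τ ⊆ σ ∧ τ.card + 1 = σ.card ∧ f σ ≤ f τ).card ≤ 1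

/-- The critical `k`-simplices of a discrete Morse function: those `σ ∈ Σ_k` having no cofacet
`ρ ⊃ σ` with `f(ρ) ≤ f(σ)` and no facet `τ ⊂ σ` with `f(τ) ≥ f(σ)`. -/
def criticals {U : Type*} [LinearOrder U] (K : Finset (Finset U)) (f : Finset U → ℕ)
    (k : ℕ) : Finset (Finset U) :=
  (faces K k).filter fun σ =>
    (K.filter fun ρ => σ ⊆ ρ ∧ ρ.card = σ.card + 1 ∧ f ρ ≤ f σ) = ∅ ∧
    (K.filter fun τ => τ ⊆ σ ∧ τ.card + 1 = σ.card ∧ f σ ≤ f τ) = ∅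

section Aux
variable {U : Type*} [LinearOrder U] (K : Finset (Finset U)) (f : Finset U → ℕ)

/-- up-filter -/
def upFil (σ : Finset U) : Finset (Finset U) :=
  K.filter fun ρ => σ ⊆ ρ ∧ ρ.card = σ.card + 1 ∧ f ρ ≤ f σ

/-- down-filter -/
def dnFil (σ : Finset U) : Finset (Finset U) :=
  K.filter fun τ => τ ⊆ σ ∧ τ.card + 1 = σ.card ∧ f σ ≤ f τ

def upF (k : ℕ) : Finset (Finset U) := (faces K k).filter fun σ => upFil K f σ ≠ ∅

def downF (k : ℕ) : Finset (Finset U) := (faces K k).filter fun σ => dnFil K f σ ≠ ∅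

variable {K f}

lemma faces_subset_K {k : ℕ} : faces K k ⊆ K := Finset.filter_subset _ _

lemma card_of_faces {k : ℕ} {σ : Finset U} (h : σ ∈ faces K k) : σ.card = k + 1 :=
  (Finset.mem_filter.mp h).2

lemma mem_K_of_faces {k : ℕ} {σ : Finset U} (h : σ ∈ faces K k) : σ ∈ K :=
  (Finset.mem_filter.mp h).1

/-- Forman's lemma: a simplex cannot be both up-matched and down-matched. -/
lemma not_up_and_down (hK : IsSimplicialComplex K) (hf : IsDiscreteMorse K f)
    {σ : Finset U} (hσ : σ ∈ K) (hu : upFil K f σ ≠ ∅) (hd : dnFil K f σ ≠ ∅) : False := by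
  obtain ⟨ρ, hρ⟩ := Finset.nonempty_iff_ne_empty.mpr hu
  obtain ⟨τ, hτ⟩ := Finset.nonempty_iff_ne_empty.mpr hd
  rw [upFil, Finset.mem_filter] at hρ
  rw [dnFil, Finset.mem_filter] at hτ
  obtain ⟨hρK, hσρ, hρc, hρf⟩ := hρ
  obtain ⟨hτK, hτσ, hτc, hτf⟩ := hτ
  -- pick a ∈ σ \ τ and b ∈ ρ \ σ
  have hac : (σ \ τ).card = 1 := by rw [Finset.card_sdiff_of_subset hτσ]; omega
  have hbc : (ρ \ σ).card = 1 := by rw [Finset.card_sdiff_of_subset hσρ]; omega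
  obtain ⟨a, ha⟩ := Finset.card_eq_one.mp hac
  obtain ⟨b, hb⟩ := Finset.card_eq_one.mp hbc
  have haσ : a ∈ σ := (Finset.mem_sdiff.mp (ha ▸ Finset.mem_singleton_self a)).1
  have haτ : a ∉ τ := (Finset.mem_sdiff.mp (ha ▸ Finset.mem_singleton_self a)).2
  have hbρ : b ∈ ρ := (Finset.mem_sdiff.mp (hb ▸ Finset.mem_singleton_self b)).1
  have hbσ : b ∉ σ := (Finset.mem_sdiff.mp (hb ▸ Finset.mem_singleton_self b)).2
  set σ' := ρ.erase a with hσ'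
  have haρ : a ∈ ρ := hσρ haσ
  have hσ'c : σ'.card = σ.card := by
    rw [hσ', Finset.card_erase_of_mem haρ]; omega
  have hσ'ρ : σ' ⊆ ρ := Finset.erase_subset _ _
  have hσ'K : σ' ∈ K := by
    refine hK.2 ρ hρK σ' hσ'ρ ?_
    rw [← Finset.card_pos, hσ'c, Finset.card_pos]
    exact hK.1 σ hσ
  have hba : b ≠ a := fun h => hbσ (h ▸ haσ)
  have hbσ' : b ∈ σ' := Finset.mem_erase.mpr ⟨hba, hbρ⟩
  have hσ'ne : σ' ≠ σ := fun h => hbσ (h ▸ hbσ')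
  have hτσ' : τ ⊆ σ' := fun x hx => Finset.mem_erase.mpr ⟨fun h => haτ (h ▸ hx), hσρ (hτσ hx)⟩
  -- σ' is a cofacet of τ distinct from σ; Morse at τ forces f σ' > f τ
  have hfσ' : f τ < f σ' := by
    by_contra h
    push_neg at h
    have h1 : σ ∈ upFil K f τ := by
      rw [upFil, Finset.mem_filter]
      exact ⟨hσ, hτσ, by omega, hτf⟩
    have h2 : σ' ∈ upFil K f τ := by
      rw [upFil, Finset.mem_filter]
      exact ⟨hσ'K, hτσ', by omega, h⟩
    have := (hf τ hτK).1
    rw [show (K.filter fun ρ => τ ⊆ ρ ∧ ρ.card = τ.card + 1 ∧ f ρ ≤ f τ) = upFil K f τ from rfl] at this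
    have hle : ({σ, σ'} : Finset (Finset U)).card ≤ (upFil K f τ).card := by
      apply Finset.card_le_card
      intro x hx
      rcases Finset.mem_insert.mp hx with h | h
      · exact h ▸ h1
      · exact (Finset.mem_singleton.mp h) ▸ h2
    rw [Finset.card_insert_of_notMem (by simpa using hσ'ne.symm), Finset.card_singleton] at hle
    omega
  -- both σ and σ' are facets of ρ with f ≥ f ρ; Morse at ρ gives contradiction
  have h1 : σ ∈ dnFil K f ρ := by
    rw [dnFil, Finset.mem_filter]; exact ⟨hσ, hσρ, by omega, hρf⟩
  have h2 : σ' ∈ dnFil K f ρ := by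
    rw [dnFil, Finset.mem_filter]
    exact ⟨hσ'K, hσ'ρ, by omega, by omega⟩
  have := (hf ρ hρK).2
  rw [show (K.filter fun τ => τ ⊆ ρ ∧ τ.card + 1 = ρ.card ∧ f ρ ≤ f τ) = dnFil K f ρ from rfl] at this
  have hle : ({σ, σ'} : Finset (Finset U)).card ≤ (dnFil K f ρ).card := by
    apply Finset.card_le_card
    intro x hx
    rcases Finset.mem_insert.mp hx with h | h
    · exact h ▸ h1
    · exact (Finset.mem_singleton.mp h) ▸ h2
  rw [Finset.card_insert_of_notMem (by simpa using hσ'ne.symm), Finset.card_singleton] at hle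
  omega

/-- partition of faces into critical, up-matched, down-matched -/
lemma faces_card_partition (hK : IsSimplicialComplex K) (hf : IsDiscreteMorse K f) (k : ℕ) :
    (faces K k).card = (criticals K f k).card + (upF K f k).card + (downF K f k).card := by
  classical
  have hdisj : Disjoint (upF K f k) (downF K f k) := by
    rw [Finset.disjoint_left]
    intro σ h1 h2
    rw [upF, Finset.mem_filter] at h1
    rw [downF, Finset.mem_filter] at h2
    exact not_up_and_down hK hf (mem_K_of_faces h1.1) h1.2 h2.2
  have hdisj2 : Disjoint (criticals K f k) (upF K f k ∪ downF K f k) := by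
    rw [Finset.disjoint_left]
    intro σ h1 h2
    rw [criticals, Finset.mem_filter] at h1
    rcases Finset.mem_union.mp h2 with h | h
    · exact (Finset.mem_filter.mp h).2 h1.2.1
    · exact (Finset.mem_filter.mp h).2 h1.2.2
  have hcover : faces K k = criticals K f k ∪ (upF K f k ∪ downF K f k) := by
    ext σ
    simp only [criticals, upF, downF, Finset.mem_union, Finset.mem_filter]
    constructor
    · intro h
      by_cases h1 : upFil K f σ = ∅
      · by_cases h2 : dnFil K f σ = ∅
        · exact Or.inl ⟨h, h1, h2⟩
        · exact Or.inr (Or.inr ⟨h, h2⟩)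
      · exact Or.inr (Or.inl ⟨h, h1⟩)
    · rintro (h | h | h) <;> exact h.1
  rw [hcover, Finset.card_union_of_disjoint hdisj2, Finset.card_union_of_disjoint hdisj]
  omega

variable (K f) in
/-- the up-match of a simplex -/
noncomputable def matchUp (σ : Finset U) : Finset U :=
  if h : (upFil K f σ).Nonempty then h.choose else ∅

variable (K f) in
lemma matchUp_mem {σ : Finset U} (h : upFil K f σ ≠ ∅) :
    matchUp K f σ ∈ upFil K f σ := by
  rw [matchUp, dif_pos (Finset.nonempty_iff_ne_empty.mpr h)]
  exact (Finset.nonempty_iff_ne_empty.mpr h).choose_spec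

lemma matchUp_spec {σ : Finset U} (h : upFil K f σ ≠ ∅) :
    matchUp K f σ ∈ K ∧ σ ⊆ matchUp K f σ ∧ (matchUp K f σ).card = σ.card + 1 ∧
      f (matchUp K f σ) ≤ f σ := by
  have := matchUp_mem K f h
  rw [upFil, Finset.mem_filter] at this
  exact ⟨this.1, this.2.1, this.2.2.1, this.2.2.2⟩

/-- the key triangularity lemma: if `σ' ⊆ matchUp σ` with `σ' ≠ σ` both up-matched
`k`-simplices, then `f σ' < f σ`. -/
lemma matchUp_triangular (hf : IsDiscreteMorse K f) {k : ℕ} {σ σ' : Finset U}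
    (hσ : σ ∈ upF K f k) (hσ' : σ' ∈ upF K f k) (hne : σ' ≠ σ)
    (hsub : σ' ⊆ matchUp K f σ) : f σ' < f σ := by
  rw [upF, Finset.mem_filter] at hσ hσ'
  obtain ⟨hρK, hσρ, hρc, hρf⟩ := matchUp_spec hσ.2
  set ρ := matchUp K f σ
  by_contra h
  push_neg at h
  -- then f ρ ≤ f σ ≤ f σ' so both σ, σ' are facets of ρ with f ≥ f ρ
  have h1 : σ ∈ dnFil K f ρ := by
    rw [dnFil, Finset.mem_filter]
    exact ⟨mem_K_of_faces hσ.1, hσρ, by omega, hρf⟩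
  have h2 : σ' ∈ dnFil K f ρ := by
    rw [dnFil, Finset.mem_filter]
    refine ⟨mem_K_of_faces hσ'.1, hsub, ?_, by omega⟩
    have := card_of_faces hσ.1; have := card_of_faces hσ'.1; omega
  have hm := (hf ρ hρK).2
  rw [show (K.filter fun τ => τ ⊆ ρ ∧ τ.card + 1 = ρ.card ∧ f ρ ≤ f τ) = dnFil K f ρ from rfl] at hm
  have hle : ({σ, σ'} : Finset (Finset U)).card ≤ (dnFil K f ρ).card := by
    apply Finset.card_le_card
    intro x hx
    rcases Finset.mem_insert.mp hx with h | h
    · exact h ▸ h1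
    · exact (Finset.mem_singleton.mp h) ▸ h2
  rw [Finset.card_insert_of_notMem (by simpa using hne.symm), Finset.card_singleton] at hle
  omega

lemma matchUp_mem_downF (hf : IsDiscreteMorse K f) {k : ℕ} {σ : Finset U}
    (hσ : σ ∈ upF K f k) : matchUp K f σ ∈ downF K f (k + 1) := by
  rw [upF, Finset.mem_filter] at hσ
  obtain ⟨hρK, hσρ, hρc, hρf⟩ := matchUp_spec hσ.2
  rw [downF, Finset.mem_filter, faces, Finset.mem_filter]
  have hc := card_of_faces hσ.1
  refine ⟨⟨hρK, by omega⟩, ?_⟩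
  rw [← Finset.nonempty_iff_ne_empty]
  refine ⟨σ, ?_⟩
  rw [dnFil, Finset.mem_filter]
  exact ⟨mem_K_of_faces hσ.1, hσρ, by omega, hρf⟩

/-- the matching is a bijection from `upF k` to `downF (k+1)` -/
lemma card_upF_eq_card_downF (hK : IsSimplicialComplex K) (hf : IsDiscreteMorse K f) (k : ℕ) :
    (upF K f k).card = (downF K f (k + 1)).card := by
  classical
  apply Finset.card_bij (fun σ _ => matchUp K f σ)
  · intro σ hσ; exact matchUp_mem_downF hf hσ
  · intro σ1 h1 σ2 h2 heq
    rw [upF, Finset.mem_filter] at h1 h2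
    obtain ⟨hK1, hs1, hc1, hf1⟩ := matchUp_spec h1.2
    obtain ⟨hK2, hs2, hc2, hf2⟩ := matchUp_spec h2.2
    set ρ := matchUp K f σ1
    by_contra hne
    have hm := (hf ρ hK1).2
    rw [show (K.filter fun τ => τ ⊆ ρ ∧ τ.card + 1 = ρ.card ∧ f ρ ≤ f τ) = dnFil K f ρ from rfl] at hm
    have m1 : σ1 ∈ dnFil K f ρ := by
      rw [dnFil, Finset.mem_filter]
      exact ⟨mem_K_of_faces h1.1, hs1, by omega, hf1⟩
    have m2 : σ2 ∈ dnFil K f ρ := by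
      rw [dnFil, Finset.mem_filter]
      have hcc := card_of_faces h1.1
      have hcc2 := card_of_faces h2.1
      exact ⟨mem_K_of_faces h2.1, heq ▸ hs2, by omega, heq ▸ hf2⟩
    have hle : ({σ1, σ2} : Finset (Finset U)).card ≤ (dnFil K f ρ).card := by
      apply Finset.card_le_card
      intro x hx
      rcases Finset.mem_insert.mp hx with h | h
      · exact h ▸ m1
      · exact (Finset.mem_singleton.mp h) ▸ m2
    rw [Finset.card_insert_of_notMem (by simpa using hne), Finset.card_singleton] at hle
    omega
  · -- surjectivity
    intro ρ hρ
    rw [downF, Finset.mem_filter] at hρ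
    obtain ⟨τ, hτ⟩ := Finset.nonempty_iff_ne_empty.mpr hρ.2
    rw [dnFil, Finset.mem_filter] at hτ
    obtain ⟨hτK, hτρ, hτc, hτf⟩ := hτ
    have hρc := card_of_faces hρ.1
    have hτfaces : τ ∈ faces K k := by
      rw [faces, Finset.mem_filter]; exact ⟨hτK, by omega⟩
    have hτfil : ρ ∈ upFil K f τ := by
      rw [upFil, Finset.mem_filter]
      exact ⟨mem_K_of_faces hρ.1, hτρ, by omega, hτf⟩
    have hne : upFil K f τ ≠ ∅ := fun h => by simp [h] at hτfil
    refine ⟨τ, by rw [upF, Finset.mem_filter]; exact ⟨hτfaces, hne⟩, ?_⟩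
    -- matchUp τ = ρ by uniqueness
    have hm := (hf τ hτK).1
    rw [show (K.filter fun ρ => τ ⊆ ρ ∧ ρ.card = τ.card + 1 ∧ f ρ ≤ f τ) = upFil K f τ from rfl] at hm
    have := matchUp_mem K f hne
    by_contra hcon
    have hle : ({matchUp K f τ, ρ} : Finset (Finset U)).card ≤ (upFil K f τ).card := by
      apply Finset.card_le_card
      intro x hx
      rcases Finset.mem_insert.mp hx with h | h
      · exact h ▸ this
      · exact (Finset.mem_singleton.mp h) ▸ hτfil
    rw [Finset.card_insert_of_notMem (by simpa using hcon), Finset.card_singleton] at hle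
    omega

lemma downF_zero (hK : IsSimplicialComplex K) : downF K f 0 = ∅ := by
  classical
  rw [Finset.eq_empty_iff_forall_notMem]
  intro σ hσ
  rw [downF, Finset.mem_filter] at hσ
  obtain ⟨τ, hτ⟩ := Finset.nonempty_iff_ne_empty.mpr hσ.2
  rw [dnFil, Finset.mem_filter] at hτ
  have hc := card_of_faces hσ.1
  have hτ0 : τ = ∅ := Finset.card_eq_zero.mp (by omega)
  have : (∅ : Finset U) ∈ K := hτ0 ▸ hτ.1
  obtain ⟨x, hx⟩ := hK.1 ∅ this
  exact absurd hx (Finset.notMem_empty x)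

lemma upF_top {n : ℕ} (hdim : ∀ σ ∈ K, σ.card ≤ n + 1) : upF K f n = ∅ := by
  classical
  rw [Finset.eq_empty_iff_forall_notMem]
  intro σ hσ
  rw [upF, Finset.mem_filter] at hσ
  obtain ⟨hρK, _, hρc, _⟩ := matchUp_spec hσ.2
  have := hdim _ hρK
  have := card_of_faces hσ.1
  omega

lemma faces_empty_of_top {n k : ℕ} (hdim : ∀ σ ∈ K, σ.card ≤ n + 1) (hk : n < k) :
    faces K k = ∅ := by
  rw [Finset.eq_empty_iff_forall_notMem]
  intro σ hσ
  have := hdim _ (mem_K_of_faces hσ)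
  have := card_of_faces hσ
  omega


section Signs
variable {σ ρ : Finset U} {a b : U}

lemma sgnZ_insert (ha : a ∉ σ) :
    sgnZ σ (insert a σ) = (-1 : ℤ) ^ ((σ.filter fun x => x < a).card) := by
  have h1 : insert a σ \ σ = {a} := by
    ext x
    simp only [Finset.mem_sdiff, Finset.mem_insert, Finset.mem_singleton]
    constructor
    · rintro ⟨h | h, h2⟩
      · exact h
      · exact absurd h h2
    · rintro rfl; exact ⟨Or.inl rfl, ha⟩
  rw [sgnZ, h1, Finset.sum_singleton]
  congr 1
  rw [Finset.filter_insert, if_neg (lt_irrefl a)]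

lemma sgnZ_facet_pm (hσρ : σ ⊆ ρ) (hc : ρ.card = σ.card + 1) :
    sgnZ σ ρ = 1 ∨ sgnZ σ ρ = -1 := by
  have : (ρ \ σ).card = 1 := by rw [Finset.card_sdiff_of_subset hσρ]; omega
  obtain ⟨v, hv⟩ := Finset.card_eq_one.mp this
  rw [sgnZ, hv, Finset.sum_singleton]
  rcases Nat.even_or_odd ((ρ.filter fun x => x < v).card) with h | h
  · left; exact Even.neg_one_pow h
  · right; exact Odd.neg_one_pow h

lemma sgnZ_ne_zero (hσρ : σ ⊆ ρ) (hc : ρ.card = σ.card + 1) : (sgnZ σ ρ : ℝ) ≠ 0 := by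
  rcases sgnZ_facet_pm hσρ hc with h | h <;> rw [h] <;> norm_num

lemma sdiff_insert_eq (hσρ : σ ⊆ ρ) (hd : ρ \ σ = {a, b}) (hab : a ≠ b) (hbσ : b ∉ σ) :
    ρ \ insert a σ = {b} := by
  have hbρ : b ∈ ρ := (Finset.mem_sdiff.mp (hd ▸ (by simp : b ∈ ({a,b} : Finset U)))).1
  ext x
  simp only [Finset.mem_sdiff, Finset.mem_insert, Finset.mem_singleton]
  constructor
  · rintro ⟨hx, hx2⟩
    push_neg at hx2
    have : x ∈ ρ \ σ := Finset.mem_sdiff.mpr ⟨hx, hx2.2⟩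
    rw [hd] at this
    rcases Finset.mem_insert.mp this with h | h
    · exact absurd h hx2.1
    · exact Finset.mem_singleton.mp h
  · rintro rfl
    exact ⟨hbρ, by push_neg; exact ⟨hab.symm, hbσ⟩⟩

lemma sgnZ_coface (hσρ : σ ⊆ ρ) (hd : ρ \ σ = {a, b}) (hab : a ≠ b) (hbσ : b ∉ σ) :
    sgnZ (insert a σ) ρ = (-1 : ℤ) ^ ((ρ.filter fun x => x < b).card) := by
  rw [sgnZ, sdiff_insert_eq hσρ hd hab hbσ, Finset.sum_singleton]

lemma filter_lt_card (hσρ : σ ⊆ ρ) (hd : ρ \ σ = {a, b}) (hab : a ≠ b)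
    (haσ : a ∉ σ) (hbσ : b ∉ σ) :
    (ρ.filter fun x => x < b).card
      = (σ.filter fun x => x < b).card + (if a < b then 1 else 0) := by
  have haρ : a ∈ ρ := (Finset.mem_sdiff.mp (hd ▸ (by simp : a ∈ ({a,b} : Finset U)))).1
  have hbρ : b ∈ ρ := (Finset.mem_sdiff.mp (hd ▸ (by simp : b ∈ ({a,b} : Finset U)))).1
  have hρeq : ρ = insert a (insert b σ) := by
    ext x
    simp only [Finset.mem_insert]
    constructor
    · intro hx
      by_cases hxσ : x ∈ σ
      · exact Or.inr (Or.inr hxσ)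
      · have : x ∈ ρ \ σ := Finset.mem_sdiff.mpr ⟨hx, hxσ⟩
        rw [hd] at this
        rcases Finset.mem_insert.mp this with h | h
        · exact Or.inl h
        · exact Or.inr (Or.inl (Finset.mem_singleton.mp h))
    · rintro (rfl | rfl | hx)
      · exact haρ
      · exact hbρ
      · exact hσρ hx
  rw [hρeq, Finset.filter_insert, Finset.filter_insert, if_neg (lt_irrefl b)]
  split_ifs with h
  · rw [Finset.card_insert_of_notMem (fun hc => haσ (Finset.mem_filter.mp hc).1)]
  · rfl

/-- the two-term cancellation -/
lemma two_term_cancel (hσρ : σ ⊆ ρ) (hd : ρ \ σ = {a, b}) (hab : a ≠ b)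
    (haσ : a ∉ σ) (hbσ : b ∉ σ) :
    sgnZ (insert a σ) ρ * sgnZ σ (insert a σ)
      + sgnZ (insert b σ) ρ * sgnZ σ (insert b σ) = 0 := by
  have hd' : ρ \ σ = {b, a} := by rw [hd, Finset.pair_comm]
  rw [sgnZ_insert haσ, sgnZ_insert hbσ, sgnZ_coface hσρ hd hab hbσ,
    sgnZ_coface hσρ hd' hab.symm haσ, filter_lt_card hσρ hd hab haσ hbσ,
    filter_lt_card hσρ hd' hab.symm hbσ haσ]
  set A := (σ.filter fun x => x < a).card
  set B := (σ.filter fun x => x < b).card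
  rcases hab.lt_or_gt with h | h
  · rw [if_pos h, if_neg (lt_asymm h)]
    ring
  · rw [if_neg (lt_asymm h), if_pos h]
    ring

end Signs

lemma cob_mul_cob (hK : IsSimplicialComplex K) (k : ℕ) :
    cobMatrix K (k + 1) * cobMatrix K k = 0 := by
  classical
  ext ρ σ
  rw [Matrix.mul_apply, Matrix.zero_apply]
  by_cases hσρ : σ.1 ⊆ ρ.1
  · have hρc : ρ.1.card = k + 3 := by have := card_of_faces ρ.2; omega
    have hσc : σ.1.card = k + 1 := card_of_faces σ.2
    have hd2 : (ρ.1 \ σ.1).card = 2 := by rw [Finset.card_sdiff_of_subset hσρ]; omega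
    obtain ⟨a, b, hab, hd⟩ := Finset.card_eq_two.mp hd2
    have hamem : a ∈ ρ.1 \ σ.1 := hd ▸ (by simp : a ∈ ({a, b} : Finset U))
    have hbmem : b ∈ ρ.1 \ σ.1 := hd ▸ (by simp : b ∈ ({a, b} : Finset U))
    have haσ : a ∉ σ.1 := (Finset.mem_sdiff.mp hamem).2
    have hbσ : b ∉ σ.1 := (Finset.mem_sdiff.mp hbmem).2
    have haρ : a ∈ ρ.1 := (Finset.mem_sdiff.mp hamem).1
    have hbρ : b ∈ ρ.1 := (Finset.mem_sdiff.mp hbmem).1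
    have hfa : insert a σ.1 ∈ faces K (k + 1) := by
      rw [faces, Finset.mem_filter]
      refine ⟨hK.2 ρ.1 (mem_K_of_faces ρ.2) _ (Finset.insert_subset haρ hσρ)
        ⟨a, Finset.mem_insert_self a _⟩, ?_⟩
      rw [Finset.card_insert_of_notMem haσ, hσc]
    have hfb : insert b σ.1 ∈ faces K (k + 1) := by
      rw [faces, Finset.mem_filter]
      refine ⟨hK.2 ρ.1 (mem_K_of_faces ρ.2) _ (Finset.insert_subset hbρ hσρ)
        ⟨b, Finset.mem_insert_self b _⟩, ?_⟩
      rw [Finset.card_insert_of_notMem hbσ, hσc]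
    have hτane : (⟨insert a σ.1, hfa⟩ : {τ // τ ∈ faces K (k + 1)}) ≠ ⟨insert b σ.1, hfb⟩ := by
      intro h
      have := congrArg Subtype.val h
      simp only at this
      have : a ∈ insert b σ.1 := this ▸ Finset.mem_insert_self a σ.1
      rcases Finset.mem_insert.mp this with h' | h'
      · exact hab h'
      · exact haσ h'
    have hsum : ∑ τ : {τ // τ ∈ faces K (k + 1)},
        cobMatrix K (k + 1) ρ τ * cobMatrix K k τ σ
        = ∑ τ ∈ ({⟨insert a σ.1, hfa⟩, ⟨insert b σ.1, hfb⟩} :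
            Finset {τ // τ ∈ faces K (k + 1)}),
          cobMatrix K (k + 1) ρ τ * cobMatrix K k τ σ := by
      refine (Finset.sum_subset (Finset.subset_univ _) ?_).symm
      intro τ _ hτ
      by_cases h1 : τ.1 ⊆ ρ.1
      · by_cases h2 : σ.1 ⊆ τ.1
        · exfalso
          have hτc : τ.1.card = k + 2 := card_of_faces τ.2
          have hc1 : (τ.1 \ σ.1).card = 1 := by rw [Finset.card_sdiff_of_subset h2]; omega
          obtain ⟨v, hv⟩ := Finset.card_eq_one.mp hc1
          have hvmem : v ∈ ρ.1 \ σ.1 :=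
            Finset.sdiff_subset_sdiff h1 (subset_refl _) (hv ▸ Finset.mem_singleton_self v)
          have hτeq : τ.1 = insert v σ.1 := by
            have h3 := Finset.union_sdiff_of_subset h2
            rw [hv] at h3
            rw [← h3]
            ext x; simp [Finset.mem_union, Finset.mem_insert, or_comm]
          rw [hd] at hvmem
          rcases Finset.mem_insert.mp hvmem with h' | h'
          · exact hτ (Finset.mem_insert.mpr (Or.inl (Subtype.ext (h' ▸ hτeq))))
          · exact hτ (Finset.mem_insert.mpr (Or.inr (Finset.mem_singleton.mpr
              (Subtype.ext ((Finset.mem_singleton.mp h') ▸ hτeq)))))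
        · simp [cobMatrix, h2]
      · simp [cobMatrix, h1]
    rw [hsum, Finset.sum_pair hτane]
    have e1 : cobMatrix K (k + 1) ρ ⟨insert a σ.1, hfa⟩ = ((sgnZ (insert a σ.1) ρ.1 : ℤ) : ℝ) := by
      rw [cobMatrix, if_pos (Finset.insert_subset haρ hσρ)]
    have e2 : cobMatrix K k ⟨insert a σ.1, hfa⟩ σ = ((sgnZ σ.1 (insert a σ.1) : ℤ) : ℝ) := by
      rw [cobMatrix, if_pos (Finset.subset_insert a σ.1)]
    have e3 : cobMatrix K (k + 1) ρ ⟨insert b σ.1, hfb⟩ = ((sgnZ (insert b σ.1) ρ.1 : ℤ) : ℝ) := by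
      rw [cobMatrix, if_pos (Finset.insert_subset hbρ hσρ)]
    have e4 : cobMatrix K k ⟨insert b σ.1, hfb⟩ σ = ((sgnZ σ.1 (insert b σ.1) : ℤ) : ℝ) := by
      rw [cobMatrix, if_pos (Finset.subset_insert b σ.1)]
    rw [e1, e2, e3, e4]
    have h0 := two_term_cancel hσρ hd hab haσ hbσ
    exact_mod_cast congrArg (fun z : ℤ => (z : ℝ)) h0
  · apply Finset.sum_eq_zero
    intro τ _
    by_cases h1 : τ.1 ⊆ ρ.1
    · by_cases h2 : σ.1 ⊆ τ.1
      · exact absurd (h2.trans h1) hσρ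
      · simp [cobMatrix, h2]
    · simp [cobMatrix, h1]

variable (K) in
noncomputable def rnk (k : ℕ) : ℕ :=
  Module.finrank ℝ (LinearMap.range (cobMatrix K k).mulVecLin)

variable (K) in
noncomputable def nul (k : ℕ) : ℕ :=
  Module.finrank ℝ (LinearMap.ker (cobMatrix K k).mulVecLin)

lemma rnk_add_nul (k : ℕ) : rnk K k + nul K k = (faces K k).card := by
  rw [rnk, nul, LinearMap.finrank_range_add_finrank_ker]
  rw [Module.finrank_pi ℝ, Fintype.card_coe]

lemma rnk_le_nul_succ (hK : IsSimplicialComplex K) (k : ℕ) :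
    rnk K k ≤ nul K (k + 1) := by
  apply Submodule.finrank_mono
  rintro x ⟨y, rfl⟩
  rw [LinearMap.mem_ker, ← LinearMap.comp_apply, ← Matrix.mulVecLin_mul,
    cob_mul_cob hK k]
  simp

lemma betti_le (k : ℕ) : betti K k ≤ nul K k := by
  cases k with
  | zero => exact le_refl _
  | succ k => exact Nat.sub_le _ _

lemma upF_subset_faces {k : ℕ} : upF K f k ⊆ faces K k := Finset.filter_subset _ _

lemma upF_card_le_rnk (hf : IsDiscreteMorse K f) (k : ℕ) :
    (upF K f k).card ≤ rnk K k := by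
  classical
  set ι := {u // u ∈ upF K f k}
  set emb : ι → {σ // σ ∈ faces K k} := fun u => ⟨u.1, upF_subset_faces u.2⟩ with hemb
  set v : ι → ({τ // τ ∈ faces K (k + 1)} → ℝ) :=
    fun u => (cobMatrix K k).mulVecLin (Pi.single (emb u) 1) with hv
  have hLI : LinearIndependent ℝ v := by
    rw [Fintype.linearIndependent_iff]
    intro g hg
    by_contra hcon
    push_neg at hcon
    obtain ⟨u1, hu1⟩ := hcon
    have hS : (Finset.univ.filter fun u : ι => g u ≠ 0).Nonempty :=
      ⟨u1, Finset.mem_filter.mpr ⟨Finset.mem_univ _, hu1⟩⟩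
    obtain ⟨u₀, hu₀S, hmin⟩ := Finset.exists_min_image _ (fun u : ι => f u.1) hS
    have hu₀g : g u₀ ≠ 0 := (Finset.mem_filter.mp hu₀S).2
    have hu₀up := u₀.2
    have hupfil : upFil K f u₀.1 ≠ ∅ := (Finset.mem_filter.mp hu₀up).2
    obtain ⟨hρK, hσρ, hρc, hρf⟩ := matchUp_spec hupfil
    set ρ := matchUp K f u₀.1
    have hρfaces : ρ ∈ faces K (k + 1) :=
      (Finset.mem_filter.mp (matchUp_mem_downF hf hu₀up)).1
    have hgρ := congrFun hg ⟨ρ, hρfaces⟩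
    simp only [Finset.sum_apply, Pi.smul_apply, smul_eq_mul, Pi.zero_apply] at hgρ
    have hterm : ∀ u : ι, v u ⟨ρ, hρfaces⟩ = cobMatrix K k ⟨ρ, hρfaces⟩ (emb u) := by
      intro u
      rw [hv]
      simp only [Matrix.mulVecLin_apply, Matrix.mulVec_single_one, Matrix.col_apply]
    rw [Finset.sum_congr rfl (fun u _ => by rw [hterm u])] at hgρ
    have hsingle : ∀ u : ι, u ≠ u₀ → g u * cobMatrix K k ⟨ρ, hρfaces⟩ (emb u) = 0 := by
      intro u hne
      by_cases hgu : g u = 0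
      · rw [hgu, zero_mul]
      · have huS : u ∈ Finset.univ.filter fun u : ι => g u ≠ 0 :=
          Finset.mem_filter.mpr ⟨Finset.mem_univ _, hgu⟩
        have hfle : f u₀.1 ≤ f u.1 := hmin u huS
        have hnsub : ¬ u.1 ⊆ ρ := by
          intro hsub
          have := matchUp_triangular hf hu₀up u.2 (fun h => hne (Subtype.ext h)) hsub
          omega
        rw [cobMatrix, hemb]
        simp only [if_neg hnsub, mul_zero]
    rw [Finset.sum_eq_single u₀ (fun u _ hne => hsingle u hne)
      (fun h => absurd (Finset.mem_univ u₀) h)] at hgρ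
    have hcob : cobMatrix K k ⟨ρ, hρfaces⟩ (emb u₀) = ((sgnZ u₀.1 ρ : ℤ) : ℝ) := by
      rw [cobMatrix, hemb, if_pos hσρ]
    rw [hcob] at hgρ
    exact hu₀g (by
      have := sgnZ_ne_zero hσρ hρc
      exact (mul_eq_zero.mp hgρ).resolve_right this)
  have hspan : Submodule.span ℝ (Set.range v) ≤ LinearMap.range (cobMatrix K k).mulVecLin := by
    rw [Submodule.span_le]
    rintro _ ⟨u, rfl⟩
    exact ⟨_, rfl⟩
  calc (upF K f k).card = Fintype.card ι := (Fintype.card_coe _).symm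
    _ = Module.finrank ℝ (Submodule.span ℝ (Set.range v)) := (finrank_span_eq_card hLI).symm
    _ ≤ rnk K k := Submodule.finrank_mono hspan


lemma rnk_top {n : ℕ} (hdim : ∀ σ ∈ K, σ.card ≤ n + 1) : rnk K n = 0 := by
  have h0 : Module.finrank ℝ ({τ // τ ∈ faces K (n + 1)} → ℝ) = 0 := by
    rw [Module.finrank_pi, Fintype.card_coe,
      faces_empty_of_top hdim (Nat.lt_succ_self n), Finset.card_empty]
  exact Nat.le_zero.mp (h0 ▸ Submodule.finrank_le _)

lemma telescope (g : ℕ → ℤ) (n : ℕ) :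
    ∑ k ∈ Finset.range (n + 1),
      (-1 : ℤ) ^ k * (g k + (if k = 0 then 0 else g (k - 1))) = (-1) ^ n * g n := by
  induction n with
  | zero => simp
  | succ n ih =>
    rw [Finset.sum_range_succ, ih, if_neg (Nat.succ_ne_zero n), Nat.add_sub_cancel]
    ring

end Aux

/-- The discrete Morse inequalities (Forman): `m_k ≥ b_k` for every `k`, and
`Σ_k (−1)^k m_k = Σ_k (−1)^k b_k`. -/
theorem stmt19 {U : Type*} [LinearOrder U] (K : Finset (Finset U))
    (hK : IsSimplicialComplex K) (n : ℕ)
    (hdim_top : (faces K n).Nonempty)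
    (hdim : ∀ σ ∈ K, σ.card ≤ n + 1)
    (f : Finset U → ℕ) (hf : IsDiscreteMorse K f) :
    (∀ k, betti K k ≤ (criticals K f k).card) ∧
      (∑ k ∈ Finset.range (n + 1), (-1 : ℤ) ^ k * ((criticals K f k).card : ℤ)) =
        ∑ k ∈ Finset.range (n + 1), (-1 : ℤ) ^ k * (betti K k : ℤ) := by
  constructor
  · intro k
    have h1 := rnk_add_nul (K := K) k
    have h4 := faces_card_partition hK hf k
    cases k with
    | zero =>
      have hb0 : betti K 0 = nul K 0 := rfl
      have h2 := upF_card_le_rnk (K := K) hf 0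
      have hd0 : (downF K f 0).card = 0 := by rw [downF_zero hK, Finset.card_empty]
      omega
    | succ k =>
      have hb1 : betti K (k + 1) = nul K (k + 1) - rnk K k := rfl
      have h1' := rnk_add_nul (K := K) (k + 1)
      have h2 := upF_card_le_rnk (K := K) hf k
      have h2' := upF_card_le_rnk (K := K) hf (k + 1)
      have h5 := card_upF_eq_card_downF hK hf k
      have h4' := faces_card_partition hK hf (k + 1)
      omega
  · have hb : ∀ k, (betti K k : ℤ)
        = ((faces K k).card : ℤ) - ((rnk K k : ℤ) + (if k = 0 then 0 else (rnk K (k - 1) : ℤ))) := by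
      intro k
      cases k with
      | zero =>
        have hb0 : betti K 0 = nul K 0 := rfl
        have h1 := rnk_add_nul (K := K) 0
        rw [hb0, if_pos rfl]
        omega
      | succ k =>
        have hb1 : betti K (k + 1) = nul K (k + 1) - rnk K k := rfl
        have h1 := rnk_add_nul (K := K) (k + 1)
        have h3 := rnk_le_nul_succ hK k
        rw [hb1, if_neg (Nat.succ_ne_zero k), Nat.add_sub_cancel]
        omega
    have hm : ∀ k, ((criticals K f k).card : ℤ)
        = ((faces K k).card : ℤ)
          - (((upF K f k).card : ℤ) + (if k = 0 then 0 else ((upF K f (k - 1)).card : ℤ))) := by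
      intro k
      have h4 := faces_card_partition hK hf k
      cases k with
      | zero =>
        have hd0 : (downF K f 0).card = 0 := by rw [downF_zero hK, Finset.card_empty]
        rw [if_pos rfl]
        omega
      | succ k =>
        have h5 := card_upF_eq_card_downF hK hf k
        rw [if_neg (Nat.succ_ne_zero k), Nat.add_sub_cancel]
        omega
    calc ∑ k ∈ Finset.range (n + 1), (-1 : ℤ) ^ k * ((criticals K f k).card : ℤ)
        = ∑ k ∈ Finset.range (n + 1), ((-1 : ℤ) ^ k * ((faces K k).card : ℤ)
            - (-1 : ℤ) ^ k * (((upF K f k).card : ℤ)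
              + (if k = 0 then 0 else ((upF K f (k - 1)).card : ℤ)))) := by
          refine Finset.sum_congr rfl fun k _ => ?_
          rw [hm k]; ring
      _ = ∑ k ∈ Finset.range (n + 1), (-1 : ℤ) ^ k * ((faces K k).card : ℤ)
            - ∑ k ∈ Finset.range (n + 1), (-1 : ℤ) ^ k * (((upF K f k).card : ℤ)
              + (if k = 0 then 0 else ((upF K f (k - 1)).card : ℤ))) := by
          rw [Finset.sum_sub_distrib]
      _ = ∑ k ∈ Finset.range (n + 1), (-1 : ℤ) ^ k * ((faces K k).card : ℤ)
            - ∑ k ∈ Finset.range (n + 1), (-1 : ℤ) ^ k * (((rnk K k : ℤ))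
              + (if k = 0 then 0 else ((rnk K (k - 1) : ℤ)))) := by
          rw [telescope (fun k => ((upF K f k).card : ℤ)) n,
            telescope (fun k => (rnk K k : ℤ)) n]
          have hu : (upF K f n).card = 0 := by rw [upF_top hdim, Finset.card_empty]
          rw [hu, rnk_top hdim]
      _ = ∑ k ∈ Finset.range (n + 1), (-1 : ℤ) ^ k * (betti K k : ℤ) := by
          rw [← Finset.sum_sub_distrib]
          refine Finset.sum_congr rfl fun k _ => ?_
          rw [hb k]; ring
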